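/- Let (G, B) be a metric n-Lie algebra possessing simple ideals. Then G has a unique maximal strong semisimple ideal S(G), equal to the (direct) sum of all simple ideals of G, and G = S(G) ⊕ S(G)^⊥. -/

import Mathlib

open scoped BigOperators

section NLiePreamble

variable {n : ℕ} {G : Type*} [AddCommGroup G] [Module ℂ G]

/-- The inner derivation `ad_y z = [y₁, …, y_{n+1}, z]` determined by an
`(n+2)`-ary alternating bracket. -/
def nAd (br : AlternatingMap ℂ G G (Fin (n + 2))) (y : Fin (n + 1) → G) (z : G) : G :=
  br (Fin.snoc y z)

/-- The generalized Jacobi identity: the bracket makes `G` an `(n+2)`-Lie algebra. -/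
def IsNLie (br : AlternatingMap ℂ G G (Fin (n + 2))) : Prop :=
  ∀ (x : Fin (n + 2) → G) (y : Fin (n + 1) → G),
    nAd br y (br x) = ∑ i, br (Function.update x i (nAd br y (x i)))

/-- A submodule `I` is an ideal: `[I, G, …, G] ⊆ I`. -/
def IsIdeal (br : AlternatingMap ℂ G G (Fin (n + 2))) (I : Submodule ℂ G) : Prop :=
  ∀ (y : Fin (n + 1) → G), ∀ x ∈ I, br (Fin.snoc y x) ∈ I

/-- Invariance of a bilinear form under the bracket. -/
def IsInvariantForm (br : AlternatingMap ℂ G G (Fin (n + 2)))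
    (K : LinearMap.BilinForm ℂ G) : Prop :=
  ∀ (x : Fin (n + 1) → G) (y₁ y₂ : G),
    K (br (Fin.snoc x y₁)) y₂ = - K (br (Fin.snoc x y₂)) y₁

/-- A metric on an `n`-Lie algebra: a nondegenerate invariant symmetric bilinear form. -/
def IsMetric (br : AlternatingMap ℂ G G (Fin (n + 2)))
    (B : LinearMap.BilinForm ℂ G) : Prop :=
  B.Nondegenerate ∧ (∀ x y : G, B x y = B y x) ∧ IsInvariantForm br B

/-- The span `[W₁, …, W_{n+2}]` of all brackets with entries in the given subspaces. -/
def bracketSpan (br : AlternatingMap ℂ G G (Fin (n + 2)))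
    (W : Fin (n + 2) → Submodule ℂ G) : Submodule ℂ G :=
  Submodule.span ℂ {z | ∃ w : Fin (n + 2) → G, (∀ i, w i ∈ W i) ∧ z = br w}

/-- The derived algebra `[G, …, G]`. -/
def derivedAlg (br : AlternatingMap ℂ G G (Fin (n + 2))) : Submodule ℂ G :=
  bracketSpan br fun _ => ⊤

/-- `[I, …, I]` for a subspace `I`. -/
def derivedStep (br : AlternatingMap ℂ G G (Fin (n + 2))) (I : Submodule ℂ G) :
    Submodule ℂ G :=
  bracketSpan br fun _ => I

/-- `[J, H, G, …, G]` for subspaces `J, H`. -/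
def pairBracket (br : AlternatingMap ℂ G G (Fin (n + 2))) (J H : Submodule ℂ G) :
    Submodule ℂ G :=
  bracketSpan br (Fin.cons J (Fin.cons H fun _ => (⊤ : Submodule ℂ G)))

/-- `[I, G, …, G]` for a subspace `I`. -/
def idealBracket (br : AlternatingMap ℂ G G (Fin (n + 2))) (I : Submodule ℂ G) :
    Submodule ℂ G :=
  bracketSpan br (Fin.cons I fun _ => (⊤ : Submodule ℂ G))

/-- The centralizer `C_G(I) = {x : [x, I, G, …, G] = 0}` of a subspace `I`. -/
def centralizer (br : AlternatingMap ℂ G G (Fin (n + 2))) (I : Submodule ℂ G) :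
    Submodule ℂ G where
  carrier := {x | ∀ v ∈ I, ∀ y : Fin n → G, br (Fin.cons x (Fin.cons v y)) = 0}
  add_mem' := by
    intro a b ha hb v hv y
    have := br.toMultilinearMap.cons_add (Fin.cons v y) a b
    simp only [AlternatingMap.coe_multilinearMap] at this
    rw [this, ha v hv y, hb v hv y, add_zero]
  zero_mem' := by
    intro v hv y
    have := br.toMultilinearMap.cons_smul (Fin.cons v y) (0 : ℂ) 0
    simpa using (br.toMultilinearMap.map_coord_zero (m := Fin.cons 0 (Fin.cons v y)) 0 rfl)
  smul_mem' := by
    intro c a ha v hv y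
    have := br.toMultilinearMap.cons_smul (Fin.cons v y) c a
    simp only [AlternatingMap.coe_multilinearMap] at this
    rw [this, ha v hv y, smul_zero]

/-- The center `C(G)`. -/
def center (br : AlternatingMap ℂ G G (Fin (n + 2))) : Submodule ℂ G :=
  centralizer br ⊤

/-- Nondegeneracy of `B` restricted to a subspace `W`. -/
def NondegOn (B : LinearMap.BilinForm ℂ G) (W : Submodule ℂ G) : Prop :=
  ∀ x ∈ W, (∀ y ∈ W, B x y = 0) → x = 0

/-- `(G, B)` is `B`-irreducible: no nontrivial nondegenerate ideals. -/
def BIrreducible (br : AlternatingMap ℂ G G (Fin (n + 2)))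
    (B : LinearMap.BilinForm ℂ G) : Prop :=
  ∀ I : Submodule ℂ G, IsIdeal br I → NondegOn B I → I = ⊥ ∨ I = ⊤

/-- `W` is a subalgebra. -/
def IsSubalgebra (br : AlternatingMap ℂ G G (Fin (n + 2))) (W : Submodule ℂ G) : Prop :=
  ∀ x : Fin (n + 2) → G, (∀ i, x i ∈ W) → br x ∈ W

/-- `I` is an ideal of the subalgebra `W`. -/
def IsIdealOf (br : AlternatingMap ℂ G G (Fin (n + 2))) (W I : Submodule ℂ G) : Prop :=
  I ≤ W ∧ ∀ (y : Fin (n + 1) → G), (∀ i, y i ∈ W) → ∀ x ∈ I, br (Fin.snoc y x) ∈ I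

/-- The subalgebra `W` is a simple `n`-Lie algebra. -/
def IsSimpleAlg (br : AlternatingMap ℂ G G (Fin (n + 2))) (W : Submodule ℂ G) : Prop :=
  derivedStep br W ≠ ⊥ ∧ ∀ I : Submodule ℂ G, IsIdealOf br W I → I = ⊥ ∨ I = W

/-- The subalgebra `W` is strong semisimple: a direct sum of simple ideals. -/
def IsStrongSemisimple (br : AlternatingMap ℂ G G (Fin (n + 2)))
    (W : Submodule ℂ G) : Prop :=
  ∃ (m : ℕ) (S : Fin m → Submodule ℂ G),
    (∀ i, IsIdealOf br W (S i) ∧ IsSimpleAlg br (S i)) ∧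
    iSupIndep S ∧ (⨆ i, S i) = W

/-- `I` is solvable (via the derived series). -/
def NLieSolvable (br : AlternatingMap ℂ G G (Fin (n + 2))) (I : Submodule ℂ G) : Prop :=
  ∃ k : ℕ, (derivedStep br)^[k] I = ⊥

/-- `R` is the radical: the maximal solvable ideal. -/
def NLieRadical (br : AlternatingMap ℂ G G (Fin (n + 2))) (R : Submodule ℂ G) : Prop :=
  IsIdeal br R ∧ NLieSolvable br R ∧
    ∀ I : Submodule ℂ G, IsIdeal br I → NLieSolvable br I → I ≤ R

/-- A Levi decomposition `G = S ⊕ R`. -/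
def IsLeviDecomp (br : AlternatingMap ℂ G G (Fin (n + 2)))
    (S R : Submodule ℂ G) : Prop :=
  NLieRadical br R ∧ IsSubalgebra br S ∧ IsStrongSemisimple br S ∧ IsCompl S R

/-- A minimal ideal of `G`. -/
def IsMinimalIdeal (br : AlternatingMap ℂ G G (Fin (n + 2))) (J : Submodule ℂ G) : Prop :=
  IsIdeal br J ∧ J ≠ ⊥ ∧
    ∀ I : Submodule ℂ G, IsIdeal br I → I ≤ J → I = ⊥ ∨ I = J

/-- The socle: the sum of all minimal ideals. -/
def socle (br : AlternatingMap ℂ G G (Fin (n + 2))) : Submodule ℂ G :=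
  sSup {J | IsMinimalIdeal br J}

/-- `H` is an `S`-submodule: `[S, …, S, H] ⊆ H`. -/
def IsSModule (br : AlternatingMap ℂ G G (Fin (n + 2))) (S H : Submodule ℂ G) : Prop :=
  ∀ (y : Fin (n + 1) → G), (∀ i, y i ∈ S) → ∀ x ∈ H, br (Fin.snoc y x) ∈ H

/-- `H` is an irreducible `S`-submodule. -/
def IsIrreducibleSModule (br : AlternatingMap ℂ G G (Fin (n + 2)))
    (S H : Submodule ℂ G) : Prop :=
  IsSModule br S H ∧ H ≠ ⊥ ∧
    ∀ K : Submodule ℂ G, K ≤ H → IsSModule br S K → K = ⊥ ∨ K = H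

/-- The space of invariant symmetric bilinear forms on `G`. -/
def invSymForms (br : AlternatingMap ℂ G G (Fin (n + 2))) :
    Submodule ℂ (LinearMap.BilinForm ℂ G) where
  carrier := {K | (∀ x y : G, K x y = K y x) ∧ IsInvariantForm br K}
  add_mem' := by
    rintro K L ⟨hK1, hK2⟩ ⟨hL1, hL2⟩
    refine ⟨fun x y => by simp [hK1 x y, hL1 x y], fun x y₁ y₂ => ?_⟩
    simp only [LinearMap.add_apply]
    rw [hK2 x y₁ y₂, hL2 x y₁ y₂]; ring
  zero_mem' := ⟨fun x y => by simp, fun x y₁ y₂ => by simp⟩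
  smul_mem' := by
    rintro c K ⟨hK1, hK2⟩
    refine ⟨fun x y => by simp [hK1 x y], fun x y₁ y₂ => ?_⟩
    simp only [LinearMap.smul_apply, smul_eq_mul]
    rw [hK2 x y₁ y₂]; ring

/-- The span of all nondegenerate invariant symmetric bilinear forms (the metric space `B(G)`). -/
def metricSpan (br : AlternatingMap ℂ G G (Fin (n + 2))) :
    Submodule ℂ (LinearMap.BilinForm ℂ G) :=
  Submodule.span ℂ {K : LinearMap.BilinForm ℂ G | IsMetric br K}

/-- `Γ_B(G)`: `B`-self-adjoint elements of the centroid. -/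
def centroidB (br : AlternatingMap ℂ G G (Fin (n + 2)))
    (B : LinearMap.BilinForm ℂ G) : Submodule ℂ (G →ₗ[ℂ] G) where
  carrier := {φ | (∀ (x : Fin (n + 1) → G) (z : G),
      φ (br (Fin.snoc x z)) = br (Fin.snoc x (φ z))) ∧
    ∀ x y : G, B (φ x) y = B x (φ y)}
  add_mem' := by
    rintro φ ψ ⟨hφ1, hφ2⟩ ⟨hψ1, hψ2⟩
    constructor
    · intro x z
      have hadd := br.toMultilinearMap.snoc_add x (φ z) (ψ z)
      simp only [AlternatingMap.coe_multilinearMap] at hadd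
      simp [hφ1 x z, hψ1 x z, hadd]
    · intro x y; simp [hφ2 x y, hψ2 x y]
  zero_mem' := by
    constructor
    · intro x z
      have h0 := br.toMultilinearMap.map_coord_zero (m := Fin.snoc x (0 : G)) (Fin.last _)
        (by simp)
      simp only [AlternatingMap.coe_multilinearMap] at h0
      simp [h0]
    · intro x y; simp
  smul_mem' := by
    rintro c φ ⟨hφ1, hφ2⟩
    constructor
    · intro x z
      have hs := br.toMultilinearMap.snoc_smul x c (φ z)
      simp only [AlternatingMap.coe_multilinearMap] at hs
      simp [hφ1 x z, hs]
    · intro x y; simp [hφ2 x y]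

end NLiePreamble

section AuxProofs

variable {n : ℕ} {G : Type*} [AddCommGroup G] [Module ℂ G]
variable (br : AlternatingMap ℂ G G (Fin (n + 2)))

/-- The bracket as a linear map in the last slot. -/
def lastMap (y : Fin (n + 1) → G) : G →ₗ[ℂ] G where
  toFun z := br (Fin.snoc y z)
  map_add' a b := by
    have h := br.toMultilinearMap.snoc_add y a b
    simpa using h
  map_smul' c a := by
    have h := br.toMultilinearMap.snoc_smul y c a
    simpa using h

/-- The bracket as a linear map in the first slot. -/
def firstMap (w : Fin (n + 1) → G) : G →ₗ[ℂ] G where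
  toFun z := br (Fin.cons z w)
  map_add' a b := by
    have h := br.toMultilinearMap.cons_add w a b
    simpa using h
  map_smul' c a := by
    have h := br.toMultilinearMap.cons_smul w c a
    simpa using h

lemma br_mem_of_entry {I : Submodule ℂ G} (hI : IsIdeal br I)
    (w : Fin (n + 2) → G) (j : Fin (n + 2)) (hj : w j ∈ I) : br w ∈ I := by
  rcases eq_or_ne j (Fin.last (n + 1)) with rfl | hne
  · have h := hI (Fin.init w) (w (Fin.last (n + 1))) hj
    rwa [Fin.snoc_init_self] at h
  · have h1 : br (w ∘ Equiv.swap j (Fin.last (n + 1))) ∈ I := by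
      have hlast : (w ∘ Equiv.swap j (Fin.last (n + 1))) (Fin.last (n + 1)) = w j := by
        simp [Equiv.swap_apply_right]
      have h := hI (Fin.init (w ∘ Equiv.swap j (Fin.last (n + 1))))
        ((w ∘ Equiv.swap j (Fin.last (n + 1))) (Fin.last (n + 1))) (by rw [hlast]; exact hj)
      rwa [Fin.snoc_init_self] at h
    have h2 : br (w ∘ Equiv.swap j (Fin.last (n + 1))) = - br w := br.map_swap w hne
    rw [h2] at h1
    simpa using neg_mem h1

lemma br_mem_of_entryOf {W I : Submodule ℂ G} (hI : IsIdealOf br W I)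
    (w : Fin (n + 2) → G) (hw : ∀ i, w i ∈ W) (j : Fin (n + 2)) (hj : w j ∈ I) : br w ∈ I := by
  rcases eq_or_ne j (Fin.last (n + 1)) with rfl | hne
  · have h := hI.2 (Fin.init w) (fun i => hw _) (w (Fin.last (n + 1))) hj
    rwa [Fin.snoc_init_self] at h
  · have h1 : br (w ∘ Equiv.swap j (Fin.last (n + 1))) ∈ I := by
      have hlast : (w ∘ Equiv.swap j (Fin.last (n + 1))) (Fin.last (n + 1)) = w j := by
        simp [Equiv.swap_apply_right]
      have h := hI.2 (Fin.init (w ∘ Equiv.swap j (Fin.last (n + 1)))) (fun i => hw _)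
        ((w ∘ Equiv.swap j (Fin.last (n + 1))) (Fin.last (n + 1))) (by rw [hlast]; exact hj)
      rwa [Fin.snoc_init_self] at h
    have h2 : br (w ∘ Equiv.swap j (Fin.last (n + 1))) = - br w := br.map_swap w hne
    rw [h2] at h1
    simpa using neg_mem h1

lemma isIdeal_iSup {ι : Sort*} (p : ι → Submodule ℂ G) (h : ∀ i, IsIdeal br (p i)) :
    IsIdeal br (⨆ i, p i) := by
  intro y x hx
  show lastMap br y x ∈ ⨆ i, p i
  refine Submodule.iSup_induction p (motive := fun z => lastMap br y z ∈ ⨆ i, p i) hx ?_ ?_ ?_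
  · intro i z hz
    exact le_iSup p i (h i y z hz)
  · simp
  · intro a b ha hb
    rw [map_add]
    exact add_mem ha hb

lemma isIdeal_sSup (s : Set (Submodule ℂ G)) (h : ∀ J ∈ s, IsIdeal br J) :
    IsIdeal br (sSup s) := by
  rw [sSup_eq_iSup']
  exact isIdeal_iSup br _ fun J => h J J.2

lemma isIdeal_inf {I J : Submodule ℂ G} (hI : IsIdeal br I) (hJ : IsIdeal br J) :
    IsIdeal br (I ⊓ J) :=
  fun y x hx => ⟨hI y x hx.1, hJ y x hx.2⟩

lemma isSubalgebra_of_isIdeal {I : Submodule ℂ G} (hI : IsIdeal br I) :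
    IsSubalgebra br I := by
  intro x hx
  have h := hI (Fin.init x) (x (Fin.last (n + 1))) (hx _)
  rwa [Fin.snoc_init_self] at h

lemma isSubalgebra_of_isIdealOf {W I : Submodule ℂ G} (hI : IsIdealOf br W I) :
    IsSubalgebra br I := by
  intro x hx
  have h := hI.2 (Fin.init x) (fun i => hI.1 (hx _)) (x (Fin.last (n + 1))) (hx _)
  rwa [Fin.snoc_init_self] at h

lemma isIdealOf_of_le {W K : Submodule ℂ G} (hK : IsIdeal br K) (hle : K ≤ W) :
    IsIdealOf br W K :=
  ⟨hle, fun y _ x hx => hK y x hx⟩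

lemma derivedStep_le {W : Submodule ℂ G} (hW : IsSubalgebra br W) :
    derivedStep br W ≤ W := by
  rw [derivedStep, bracketSpan]
  rw [Submodule.span_le]
  rintro z ⟨w, hw, rfl⟩
  exact hW w hw

lemma snoc_mem {W : Submodule ℂ G} {y : Fin (n + 1) → G} (hy : ∀ i, y i ∈ W) {z : G}
    (hz : z ∈ W) : ∀ i, (Fin.snoc y z : Fin (n + 2) → G) i ∈ W := by
  intro i
  refine Fin.lastCases ?_ (fun j => ?_) i
  · simpa using hz
  · simpa using hy j

lemma derivedStep_isIdealOf {W : Submodule ℂ G} (hW : IsSubalgebra br W) :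
    IsIdealOf br W (derivedStep br W) := by
  refine ⟨derivedStep_le br hW, fun y hy x hx => ?_⟩
  show lastMap br y x ∈ derivedStep br W
  have hmap : Submodule.map (lastMap br y) (derivedStep br W) ≤ derivedStep br W := by
    rw [derivedStep, bracketSpan]
    rw [Submodule.map_span_le]
    rintro z ⟨w, hw, rfl⟩
    exact Submodule.subset_span ⟨Fin.snoc y (br w), snoc_mem hy (hW w hw), rfl⟩
  exact hmap ⟨x, hx, rfl⟩

lemma simple_ne_bot {W : Submodule ℂ G} (hs : IsSimpleAlg br W) : W ≠ ⊥ := by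
  intro h
  subst h
  apply hs.1
  rw [eq_bot_iff]
  refine derivedStep_le br ?_
  intro x hx
  have h0 : x 0 = 0 := (Submodule.mem_bot ℂ).1 (hx 0)
  exact (Submodule.mem_bot ℂ).2 (br.toMultilinearMap.map_coord_zero 0 h0)

lemma derivedStep_eq_self {W : Submodule ℂ G} (hW : IsSubalgebra br W)
    (hs : IsSimpleAlg br W) : derivedStep br W = W :=
  (hs.2 _ (derivedStep_isIdealOf br hW)).resolve_left hs.1

lemma simple_inf_eq_bot {J1 J2 : Submodule ℂ G}
    (h1 : IsIdeal br J1 ∧ IsSimpleAlg br J1) (h2 : IsIdeal br J2 ∧ IsSimpleAlg br J2)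
    (hne : J1 ≠ J2) : J1 ⊓ J2 = ⊥ := by
  have hK : IsIdeal br (J1 ⊓ J2) := isIdeal_inf br h1.1 h2.1
  rcases h1.2.2 _ (isIdealOf_of_le br hK inf_le_left) with h | h
  · exact h
  · have hle : J1 ≤ J2 := by rw [← h]; exact inf_le_right
    rcases h2.2.2 _ (isIdealOf_of_le br h1.1 hle) with h' | h'
    · exact absurd h' (simple_ne_bot br h1.2)
    · exact absurd h' hne

lemma centralizer_isIdeal (hLie : IsNLie br) {J : Submodule ℂ G} (hJ : IsIdeal br J) :
    IsIdeal br (centralizer br J) := by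
  intro y x hx
  have hx' : ∀ v ∈ J, ∀ z : Fin n → G, br (Fin.cons x (Fin.cons v z)) = 0 := hx
  show ∀ v ∈ J, ∀ z : Fin n → G, br (Fin.cons (br (Fin.snoc y x)) (Fin.cons v z)) = 0
  intro v hv z
  have key := hLie (Fin.cons x (Fin.cons v z)) y
  have h0 : br (Fin.cons x (Fin.cons v z)) = 0 := hx' v hv z
  rw [h0] at key
  have hL : nAd br y (0 : G) = 0 := by
    simpa [nAd] using br.toMultilinearMap.map_coord_zero (m := Fin.snoc y (0 : G)) (Fin.last (n + 1))
      (by simp)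
  rw [hL, Fin.sum_univ_succ, Fin.sum_univ_succ] at key
  simp only [Fin.cons_zero, Fin.cons_succ, ← Fin.cons_update, Fin.update_cons_zero] at key
  have ht2 : br (Fin.cons x (Fin.cons (nAd br y v) z)) = 0 := hx' _ (hJ y v hv) z
  have ht3 : (∑ j : Fin n, br (Fin.cons x (Fin.cons v (Function.update z j (nAd br y (z j)))))) = 0 :=
    Finset.sum_eq_zero fun j _ => hx' v hv _
  rw [ht2, ht3] at key
  simpa [nAd] using key.symm

lemma exists_decomp {m : ℕ} (fam : Fin m → Submodule ℂ G) {x : G} (hx : x ∈ ⨆ i, fam i) :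
    ∃ f : Fin m → G, (∀ i, f i ∈ fam i) ∧ x = ∑ i, f i := by
  classical
  refine Submodule.iSup_induction fam
    (motive := fun z => ∃ f : Fin m → G, (∀ i, f i ∈ fam i) ∧ z = ∑ i, f i) hx ?_ ?_ ?_
  · intro i z hz
    refine ⟨Pi.single i z, fun j => ?_, ?_⟩
    · rcases eq_or_ne j i with rfl | hne
      · simpa using hz
      · simp [Pi.single_eq_of_ne hne]
    · simp [Finset.sum_pi_single']
  · exact ⟨0, by simp, by simp⟩
  · rintro a b ⟨f, hf, rfl⟩ ⟨g, hg, rfl⟩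
    exact ⟨f + g, fun i => add_mem (hf i) (hg i), by simp [Finset.sum_add_distrib]⟩

lemma exists_fin_family [FiniteDimensional ℂ G] (𝒮 : Set (Submodule ℂ G)) :
    ∃ (m : ℕ) (fam : Fin m → Submodule ℂ G), Function.Injective fam ∧
      (∀ i, fam i ∈ 𝒮) ∧ (⨆ i, fam i) = sSup 𝒮 := by
  classical
  have hwf : WellFounded ((· > ·) : Submodule ℂ G → Submodule ℂ G → Prop) :=
    IsWellFounded.wf
  obtain ⟨N, hNT, hNmax⟩ := hwf.has_min
    {N | ∃ F : Finset (Submodule ℂ G), ↑F ⊆ 𝒮 ∧ N = F.sup id}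
    ⟨⊥, ∅, by simp, by simp⟩
  obtain ⟨F, hF𝒮, rfl⟩ := hNT
  have hall : ∀ J ∈ 𝒮, J ≤ F.sup id := by
    intro J hJ
    by_contra hle
    refine hNmax ((insert J F).sup id) ⟨insert J F, ?_, rfl⟩ ?_
    · rw [Finset.coe_insert]
      exact Set.insert_subset_iff.2 ⟨hJ, hF𝒮⟩
    · rw [Finset.sup_insert]
      exact right_lt_sup.2 hle
  have hsup_eq : F.sup id = sSup 𝒮 :=
    le_antisymm (Finset.sup_le fun J hJ => le_sSup (hF𝒮 hJ)) (sSup_le hall)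
  refine ⟨F.card, fun i => (F.equivFin.symm i).1, ?_, ?_, ?_⟩
  · intro i j h
    exact F.equivFin.symm.injective (Subtype.ext h)
  · intro i
    exact hF𝒮 (F.equivFin.symm i).2
  · rw [← hsup_eq]
    apply le_antisymm
    · exact iSup_le fun i => Finset.le_sup (f := id) (F.equivFin.symm i).2
    · refine Finset.sup_le fun J hJ => ?_
      have h : (F.equivFin.symm (F.equivFin ⟨J, hJ⟩)).1 = J := by simp
      exact le_iSup_of_le (F.equivFin ⟨J, hJ⟩) (by simp only [h]; exact le_rfl)

end AuxProofs


variable {n : ℕ} {G : Type*} [AddCommGroup G] [Module ℂ G]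

theorem maximal_strong_semisimple_ideal
    (br : AlternatingMap ℂ G G (Fin (n + 2))) (hLie : IsNLie br)
    [FiniteDimensional ℂ G]
    (B : LinearMap.BilinForm ℂ G) (hB : IsMetric br B)
    (hex : ∃ J : Submodule ℂ G, IsIdeal br J ∧ IsSimpleAlg br J) :
    IsIdeal br (sSup {J : Submodule ℂ G | IsIdeal br J ∧ IsSimpleAlg br J}) ∧
    IsStrongSemisimple br (sSup {J : Submodule ℂ G | IsIdeal br J ∧ IsSimpleAlg br J}) ∧
    (∀ I : Submodule ℂ G, IsIdeal br I → IsStrongSemisimple br I →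
      I ≤ sSup {J : Submodule ℂ G | IsIdeal br J ∧ IsSimpleAlg br J}) ∧
    IsCompl (sSup {J : Submodule ℂ G | IsIdeal br J ∧ IsSimpleAlg br J})
      (B.orthogonal (sSup {J : Submodule ℂ G | IsIdeal br J ∧ IsSimpleAlg br J})) := by
  classical
  set 𝒮 : Set (Submodule ℂ G) := {J : Submodule ℂ G | IsIdeal br J ∧ IsSimpleAlg br J} with h𝒮
  have hmem𝒮 : ∀ J ∈ 𝒮, IsIdeal br J ∧ IsSimpleAlg br J := fun J hJ => hJ
  obtain ⟨hnd, hsymm, hinv⟩ := hB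
  have hSideal : IsIdeal br (sSup 𝒮) := isIdeal_sSup br 𝒮 fun J hJ => (hmem𝒮 J hJ).1
  obtain ⟨m, fam, hinj, hmem, hsup⟩ := exists_fin_family 𝒮
  have hdisj : ∀ i j, i ≠ j → fam i ⊓ fam j = ⊥ := fun i j hij =>
    simple_inf_eq_bot br (hmem i) (hmem j) (hinj.ne hij)
  have hfamle : ∀ i, fam i ≤ sSup 𝒮 := fun i => le_sSup (hmem i)
  -- independence of the family
  have hindep : iSupIndep fam := by
    intro i
    rw [disjoint_iff]
    have hXideal : IsIdeal br (⨆ (j) (_ : j ≠ i), fam j) :=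
      isIdeal_iSup br _ fun j => isIdeal_iSup br _ fun _ => (hmem j).1
    have hKideal : IsIdeal br (fam i ⊓ ⨆ (j) (_ : j ≠ i), fam j) :=
      isIdeal_inf br (hmem i).1 hXideal
    rcases (hmem i).2.2 _ (isIdealOf_of_le br hKideal inf_le_left) with h | h
    · exact h
    · exfalso
      have hle : fam i ≤ ⨆ (j) (_ : j ≠ i), fam j := by rw [← h]; exact inf_le_right
      apply (hmem i).2.1
      rw [eq_bot_iff, derivedStep, bracketSpan, Submodule.span_le]
      rintro z ⟨w, hw, rfl⟩
      have hker : (⨆ (j) (_ : j ≠ i), fam j) ≤ LinearMap.ker (lastMap br (Fin.init w)) := by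
        refine iSup_le fun j => iSup_le fun hj => fun u hu => ?_
        rw [LinearMap.mem_ker]
        have hmem1 : br (Fin.snoc (Fin.init w) u) ∈ fam i :=
          br_mem_of_entry br (hmem i).1 _ (Fin.castSucc 0)
            (by rw [Fin.snoc_castSucc]; exact hw (Fin.castSucc 0))
        have hmem2 : br (Fin.snoc (Fin.init w) u) ∈ fam j :=
          br_mem_of_entry br (hmem j).1 _ (Fin.last (n + 1)) (by simpa using hu)
        have hb : br (Fin.snoc (Fin.init w) u) ∈ fam i ⊓ fam j := ⟨hmem1, hmem2⟩
        rw [hdisj i j (Ne.symm hj)] at hb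
        exact (Submodule.mem_bot ℂ).1 hb
      have hz0 : lastMap br (Fin.init w) (w (Fin.last (n + 1))) = 0 :=
        LinearMap.mem_ker.1 (hker (hle (hw (Fin.last (n + 1)))))
      rw [SetLike.mem_coe, Submodule.mem_bot, ← Fin.snoc_init_self w]
      exact hz0
  -- part 2 : strong semisimplicity
  have hstrong : IsStrongSemisimple br (sSup 𝒮) :=
    ⟨m, fam, fun i => ⟨⟨hfamle i, fun y _ x hx => (hmem i).1 y x hx⟩, (hmem i).2⟩, hindep, hsup⟩
  -- part 3 : maximality
  have hpart3 : ∀ I : Submodule ℂ G, IsIdeal br I → IsStrongSemisimple br I → I ≤ sSup 𝒮 := by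
    rintro I hI ⟨m', T, hT, -, hTsup⟩
    rw [← hTsup]
    refine iSup_le fun k => le_sSup ?_
    have hsub : IsSubalgebra br (T k) := isSubalgebra_of_isIdealOf br (hT k).1
    have hperf : derivedStep br (T k) = T k := derivedStep_eq_self br hsub (hT k).2
    refine ⟨?_, (hT k).2⟩
    intro y x hx
    show lastMap br y x ∈ T k
    have hmap : Submodule.map (lastMap br y) (derivedStep br (T k)) ≤ T k := by
      rw [derivedStep, bracketSpan, Submodule.map_span_le]
      rintro z ⟨w, hw, rfl⟩
      show br (Fin.snoc y (br w)) ∈ T k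
      rw [show br (Fin.snoc y (br w)) = nAd br y (br w) from rfl, hLie w y]
      refine Submodule.sum_mem _ fun i _ => ?_
      have hv : nAd br y (w i) ∈ I := hI y (w i) ((hT k).1.1 (hw i))
      obtain ⟨j, hj⟩ : ∃ j : Fin (n + 2), j ≠ i := by
        rcases eq_or_ne i 0 with rfl | h
        · exact ⟨Fin.succ 0, Fin.succ_ne_zero 0⟩
        · exact ⟨0, Ne.symm h⟩
      refine br_mem_of_entryOf br (hT k).1 _ (fun l => ?_) j ?_
      · rcases eq_or_ne l i with rfl | hne
        · rw [Function.update_self]; exact hv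
        · rw [Function.update_of_ne hne]; exact (hT k).1.1 (hw l)
      · rw [Function.update_of_ne hj]; exact hw j
    rw [← hperf] at hx
    exact hmap ⟨x, hx, rfl⟩
  -- part 4 : complementarity
  have hrefl : B.IsRefl := fun x y h => by rw [hsymm y x]; exact h
  have horthideal : IsIdeal br (B.orthogonal (sSup 𝒮)) := by
    intro y x hx
    rw [LinearMap.BilinForm.mem_orthogonal_iff] at hx ⊢
    intro s hs
    show B s (br (Fin.snoc y x)) = 0
    rw [hsymm, hinv y x s]
    have h0 : B (br (Fin.snoc y s)) x = 0 := hx _ (hSideal y s hs)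
    rw [h0, neg_zero]
  have hperfS : ∀ J ∈ 𝒮, derivedStep br J = J := fun J hJ =>
    derivedStep_eq_self br (isSubalgebra_of_isIdeal br (hmem𝒮 J hJ).1) (hmem𝒮 J hJ).2
  have hnotle : ∀ J ∈ 𝒮, ¬ J ≤ B.orthogonal (sSup 𝒮) := by
    intro J hJ hle
    apply simple_ne_bot br (hmem𝒮 J hJ).2
    rw [eq_bot_iff]
    intro a ha
    rw [Submodule.mem_bot]
    apply hnd.1
    intro g
    suffices hJg : ∀ z ∈ J, B z g = 0 by exact hJg a ha
    intro z hz
    rw [← hperfS J hJ, derivedStep, bracketSpan] at hz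
    induction hz using Submodule.span_induction with
    | mem z hzz =>
      obtain ⟨u, hu, rfl⟩ := hzz
      show B (br u) g = 0
      conv_lhs => rw [← Fin.snoc_init_self u]
      rw [hinv (Fin.init u) (u (Fin.last (n + 1))) g]
      have hmemJ : br (Fin.snoc (Fin.init u) g) ∈ J :=
        br_mem_of_entry br (hmem𝒮 J hJ).1 _ (Fin.castSucc 0)
          (by rw [Fin.snoc_castSucc]; exact hu (Fin.castSucc 0))
      have h0 : B (br (Fin.snoc (Fin.init u) g)) (u (Fin.last (n + 1))) = 0 := by
        have horth := hle (hu (Fin.last (n + 1)))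
        rw [LinearMap.BilinForm.mem_orthogonal_iff] at horth
        exact horth _ (le_sSup hJ hmemJ)
      rw [h0, neg_zero]
    | zero => simp
    | add a b _ _ ha hb => simp [map_add, ha, hb]
    | smul c a _ ha => simp [map_smul, ha]
  have hKideal : IsIdeal br (sSup 𝒮 ⊓ B.orthogonal (sSup 𝒮)) :=
    isIdeal_inf br hSideal horthideal
  have hKJ : ∀ i, (sSup 𝒮 ⊓ B.orthogonal (sSup 𝒮)) ⊓ fam i = ⊥ := by
    intro i
    have hid : IsIdeal br ((sSup 𝒮 ⊓ B.orthogonal (sSup 𝒮)) ⊓ fam i) :=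
      isIdeal_inf br hKideal (hmem i).1
    rcases (hmem i).2.2 _ (isIdealOf_of_le br hid inf_le_right) with h | h
    · exact h
    · exfalso
      apply hnotle (fam i) (hmem i)
      rw [← h]
      exact le_trans inf_le_left inf_le_right
  have hrestr : ∀ x ∈ sSup 𝒮, (∀ u ∈ sSup 𝒮, B x u = 0) → x = 0 := by
    intro x hxS hxorth
    have hxorth' : x ∈ B.orthogonal (sSup 𝒮) := by
      rw [LinearMap.BilinForm.mem_orthogonal_iff]
      intro s hs
      show B s x = 0
      rw [hsymm]
      exact hxorth s hs
    have hxK : x ∈ sSup 𝒮 ⊓ B.orthogonal (sSup 𝒮) := ⟨hxS, hxorth'⟩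
    obtain ⟨f, hf, hxeq⟩ := exists_decomp fam (by rw [hsup]; exact hxS)
    have hfzero : ∀ i0, f i0 = 0 := by
      intro i0
      have hcent : f i0 ∈ centralizer br (fam i0) := by
        show ∀ v ∈ fam i0, ∀ z : Fin n → G, br (Fin.cons (f i0) (Fin.cons v z)) = 0
        intro v hv z
        have h1 : firstMap br (Fin.cons v z) x ∈ (sSup 𝒮 ⊓ B.orthogonal (sSup 𝒮)) ⊓ fam i0 :=
          ⟨br_mem_of_entry br hKideal _ 0 (by simpa using hxK),
           br_mem_of_entry br (hmem i0).1 _ (Fin.succ 0) (by simpa using hv)⟩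
        rw [hKJ i0, Submodule.mem_bot] at h1
        have h2 : firstMap br (Fin.cons v z) x = ∑ i, firstMap br (Fin.cons v z) (f i) := by
          rw [hxeq, map_sum]
        have h3 : ∀ i ∈ Finset.univ, i ≠ i0 → firstMap br (Fin.cons v z) (f i) = 0 := by
          intro i _ hne
          have hb : firstMap br (Fin.cons v z) (f i) ∈ fam i ⊓ fam i0 :=
            ⟨br_mem_of_entry br (hmem i).1 _ 0 (by simpa using hf i),
             br_mem_of_entry br (hmem i0).1 _ (Fin.succ 0) (by simpa using hv)⟩
          rw [hdisj i i0 hne, Submodule.mem_bot] at hb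
          exact hb
        have h4 : firstMap br (Fin.cons v z) (f i0) = 0 := by
          have hs : (∑ i, firstMap br (Fin.cons v z) (f i)) = firstMap br (Fin.cons v z) (f i0) :=
            Finset.sum_eq_single i0 h3 (by simp)
          rw [← hs, ← h2]
          exact h1
        exact h4
      have hMideal : IsIdeal br (fam i0 ⊓ centralizer br (fam i0)) :=
        isIdeal_inf br (hmem i0).1 (centralizer_isIdeal br hLie (hmem i0).1)
      rcases (hmem i0).2.2 _ (isIdealOf_of_le br hMideal inf_le_left) with h | h
      · have hb : f i0 ∈ fam i0 ⊓ centralizer br (fam i0) := ⟨hf i0, hcent⟩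
        rw [h] at hb
        simpa using hb
      · exfalso
        have hle : fam i0 ≤ centralizer br (fam i0) := by
          conv_lhs => rw [← h]
          exact inf_le_right
        apply (hmem i0).2.1
        rw [eq_bot_iff, derivedStep, bracketSpan, Submodule.span_le]
        rintro z ⟨w, hw, rfl⟩
        have hc : ∀ v ∈ fam i0, ∀ z : Fin n → G, br (Fin.cons (w 0) (Fin.cons v z)) = 0 :=
          hle (hw 0)
        have h0 := hc (Fin.tail w 0) (hw (Fin.succ 0)) (Fin.tail (Fin.tail w))
        rw [Fin.cons_self_tail, Fin.cons_self_tail] at h0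
        simpa using h0
    rw [hxeq]
    exact Finset.sum_eq_zero fun i _ => hfzero i
  have hrestrnd : (B.restrict (sSup 𝒮)).Nondegenerate := by
    refine ⟨fun x hx => ?_, fun x hx => ?_⟩
    · have h0 := hrestr x x.2 fun u hu => by simpa using hx ⟨u, hu⟩
      exact Subtype.ext h0
    · have h0 := hrestr x x.2 fun u hu => by rw [hsymm]; simpa using hx ⟨u, hu⟩
      exact Subtype.ext h0
  exact ⟨hSideal, hstrong, hpart3,
    (LinearMap.BilinForm.restrict_nondegenerate_iff_isCompl_orthogonal hrefl).1 hrestrnd⟩
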